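/- For every α > 0, the function s(α) := ∫₀¹ (α/(8πt)) Σ_{k∈ℤ} ( ∫_{2k−1}^{2k+1} e^{−αx²/(8t)} dx )² dt admits the equivalent representation s(α) = (1/2) Σ_{k∈ℤ} ∫₀¹ erf( (2k−1)√(α/(8t)) ) · [ erf( (2k−1)√(α/(8t)) ) − erf( (2k+1)√(α/(8t)) ) ] dt. -/

import Mathlib

open MeasureTheory Filter

/-- The error function `erf x = (2/√π) ∫_0^x e^{-s²} ds`. -/
noncomputable def erf (x : ℝ) : ℝ :=
  (2 / Real.sqrt Real.pi) * ∫ s in (0:ℝ)..x, Real.exp (-s ^ 2)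

/-- `c(α) = ∫_0^1 erf(√(α/(8t))) dt`. -/
noncomputable def cFun (α : ℝ) : ℝ :=
  ∫ t in (0:ℝ)..1, erf (Real.sqrt (α / (8 * t)))

/-- `s(α) = ∫_0^1 (α/(8πt)) Σ_{k∈ℤ} (∫_{2k-1}^{2k+1} e^{-αx²/(8t)} dx)² dt`. -/
noncomputable def sFun (α : ℝ) : ℝ :=
  ∫ t in (0:ℝ)..1, (α / (8 * Real.pi * t)) *
    ∑' k : ℤ, (∫ x in (2 * (k : ℝ) - 1)..(2 * (k : ℝ) + 1),
      Real.exp (-(α * x ^ 2) / (8 * t))) ^ 2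

lemma expsq_ii (a b : ℝ) : IntervalIntegrable (fun s : ℝ => Real.exp (-s ^ 2)) volume a b :=
  (Real.continuous_exp.comp (by continuity)).intervalIntegrable a b

lemma erf_neg (x : ℝ) : erf (-x) = - erf x := by
  unfold erf
  rw [← mul_neg]
  congr 1
  have : ∀ s : ℝ, Real.exp (-s ^ 2) = Real.exp (-(-s) ^ 2) := by intro s; ring_nf
  rw [intervalIntegral.integral_congr (g := fun s => Real.exp (-(-s)^2)) (fun s _ => this s),
    intervalIntegral.integral_comp_neg (fun s => Real.exp (-s^2)), neg_zero,
    intervalIntegral.integral_symm, neg_neg]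

lemma erf_mono : Monotone erf := by
  intro x y hxy
  unfold erf
  have h := intervalIntegral.integral_interval_sub_left (expsq_ii 0 y) (expsq_ii 0 x)
  have hnn : 0 ≤ ∫ s in x..y, Real.exp (-s ^ 2) :=
    intervalIntegral.integral_nonneg hxy (fun u _ => (Real.exp_pos _).le)
  have h2 : (0:ℝ) ≤ 2 / Real.sqrt Real.pi := by positivity
  nlinarith [h, hnn]

lemma erf_le_one (x : ℝ) : erf x ≤ 1 := by
  unfold erf
  rcases le_or_gt x 0 with hx | hx
  · have : ∫ s in (0:ℝ)..x, Real.exp (-s ^ 2) ≤ 0 := by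
      rw [intervalIntegral.integral_symm]
      simp only [neg_nonpos]
      exact intervalIntegral.integral_nonneg hx (fun u _ => (Real.exp_pos _).le)
    have h2 : (0:ℝ) ≤ 2 / Real.sqrt Real.pi := by positivity
    nlinarith
  · have hint : IntegrableOn (fun s : ℝ => Real.exp (-s ^ 2)) (Set.Ioi 0) volume := by
      have := (integrable_exp_neg_mul_sq (b := (1:ℝ)) one_pos).integrableOn (s := Set.Ioi 0)
      simpa using this
    have h1 : ∫ s in (0:ℝ)..x, Real.exp (-s ^ 2) ≤ ∫ s in Set.Ioi (0:ℝ), Real.exp (-s ^ 2) := by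
      rw [intervalIntegral.integral_of_le hx.le]
      apply setIntegral_mono_set hint (ae_of_all _ fun s => (Real.exp_pos _).le)
      exact HasSubset.Subset.eventuallyLE Set.Ioc_subset_Ioi_self
    have h2 : ∫ s in Set.Ioi (0:ℝ), Real.exp (-s ^ 2) = Real.sqrt Real.pi / 2 := by
      have := integral_gaussian_Ioi 1
      simpa using this
    rw [h2] at h1
    have hπ : 0 < Real.sqrt Real.pi := Real.sqrt_pos.2 Real.pi_pos
    calc (2 / Real.sqrt Real.pi) * ∫ s in (0:ℝ)..x, Real.exp (-s ^ 2)
        ≤ (2 / Real.sqrt Real.pi) * (Real.sqrt Real.pi / 2) := by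
          apply mul_le_mul_of_nonneg_left h1 (by positivity)
      _ = 1 := by field_simp


lemma neg_one_le_erf (x : ℝ) : -1 ≤ erf x := by
  have := erf_le_one (-x); rw [erf_neg] at this; linarith

lemma continuous_erf : Continuous erf :=
  continuous_const.mul (intervalIntegral.continuous_primitive (fun a b => expsq_ii a b) 0)

/-- Gaussian interval integral in terms of erf. -/
lemma integral_exp_sq_erf (c a b : ℝ) (hc : 0 < c) :
    ∫ x in a..b, Real.exp (-(c*x) ^ 2) = Real.sqrt Real.pi / (2*c) * (erf (c*b) - erf (c*a)) := by
  have h1 : c * ∫ x in a..b, Real.exp (-(c*x) ^ 2) = ∫ x in c*a..c*b, Real.exp (-x ^ 2) :=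
    intervalIntegral.mul_integral_comp_mul_left (a:=a) (b:=b) (f := fun x => Real.exp (-x ^ 2)) c
  have h2 : (∫ x in (0:ℝ)..c*b, Real.exp (-x^2)) - ∫ x in (0:ℝ)..c*a, Real.exp (-x^2)
      = ∫ x in c*a..c*b, Real.exp (-x ^ 2) :=
    intervalIntegral.integral_interval_sub_left (expsq_ii 0 (c*b)) (expsq_ii 0 (c*a))
  have hπ : 0 < Real.sqrt Real.pi := Real.sqrt_pos.2 Real.pi_pos
  have h3 : erf (c*b) - erf (c*a)
      = (2 / Real.sqrt Real.pi) * ∫ x in c*a..c*b, Real.exp (-x ^ 2) := by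
    unfold erf; rw [← h2]; ring
  rw [h3, ← h1]
  field_simp

lemma Icc_int_insert (m b : ℤ) (h : m ≤ b + 1) :
    Finset.Icc m (b + 1) = insert (b + 1) (Finset.Icc m b) := by
  ext k; simp only [Finset.mem_Icc, Finset.mem_insert]; omega

lemma sum_Icc_tele (F : ℤ → ℝ) (m : ℤ) : ∀ n : ℕ,
    ∑ k ∈ Finset.Icc m (m + n), (F (k+1) - F k) = F (m + n + 1) - F m := by
  intro n
  induction n with
  | zero => simp
  | succ n ih =>
    have h1 : (m + ((n:ℤ)+1)) = (m + n) + 1 := by ring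
    have h2 : (m + ((n+1:ℕ):ℤ)) = (m + n) + 1 := by push_cast; ring
    rw [h2, Icc_int_insert m (m+n) (by omega), Finset.sum_insert (by simp)]
    rw [ih]; ring

lemma sum_diff_le (F : ℤ → ℝ) (hm : Monotone F) (hub : ∀ k, |F k| ≤ 1) (u : Finset ℤ) :
    ∑ k ∈ u, (F (k+1) - F k) ≤ 2 := by
  rcases u.eq_empty_or_nonempty with rfl | hu
  · norm_num
  · set m := u.min' hu
    set M := u.max' hu
    have hmM : m ≤ M := u.min'_le (u.max' hu) (u.max'_mem hu)
    have hsub : u ⊆ Finset.Icc m M := by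
      intro k hk
      simp only [Finset.mem_Icc]
      exact ⟨u.min'_le k hk, u.le_max' k hk⟩
    have hnn : ∀ k ∈ Finset.Icc m M, k ∉ u → 0 ≤ F (k+1) - F k := by
      intro k _ _; simp only [sub_nonneg]; exact hm (by omega)
    have h1 : ∑ k ∈ u, (F (k+1) - F k) ≤ ∑ k ∈ Finset.Icc m M, (F (k+1) - F k) :=
      Finset.sum_le_sum_of_subset_of_nonneg hsub hnn
    have hMm : M = m + ((M - m).toNat : ℤ) := by omega
    have h2 : ∑ k ∈ Finset.Icc m M, (F (k+1) - F k) = F (M + 1) - F m := by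
      rw [hMm]; exact sum_Icc_tele F m (M - m).toNat
    have := abs_le.1 (hub (M+1))
    have := abs_le.1 (hub m)
    linarith

lemma summable_diff (F : ℤ → ℝ) (hm : Monotone F) (hub : ∀ k, |F k| ≤ 1) :
    Summable (fun k : ℤ => F (k+1) - F k) :=
  summable_of_sum_le (fun k => sub_nonneg.2 (hm (by omega))) (sum_diff_le F hm hub)

lemma key_identity (a : ℤ → ℝ) (hodd : ∀ k, a (1 - k) = - a k) (hmono : Monotone a)
    (hb : ∀ k, |a k| ≤ 1) :
    ∑' k : ℤ, (a (k+1) - a k)^2 = 2 * ∑' k : ℤ, a k * (a k - a (k+1)) := by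
  set d : ℤ → ℝ := fun k => a (k+1) - a k with hd
  have hdnn : ∀ k, 0 ≤ d k := fun k => sub_nonneg.2 (hmono (by omega))
  have hdle : ∀ k, d k ≤ 2 := by
    intro k
    have := abs_le.1 (hb (k+1)); have := abs_le.1 (hb k)
    simp only [hd]; linarith
  have hds : Summable d := summable_diff a hmono hb
  have hgs : Summable (fun k : ℤ => a k * (a k - a (k+1))) := by
    apply Summable.of_norm
    apply hds.of_nonneg_of_le (fun k => norm_nonneg _)
    intro k
    have : a k * (a k - a (k+1)) = -(a k * d k) := by simp only [hd]; ring
    rw [this, norm_neg, norm_mul]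
    calc ‖a k‖ * ‖d k‖ ≤ 1 * ‖d k‖ := by
          apply mul_le_mul_of_nonneg_right _ (norm_nonneg _)
          simpa [Real.norm_eq_abs] using hb k
      _ = d k := by rw [one_mul, Real.norm_eq_abs, abs_of_nonneg (hdnn k)]
  have hes : Summable (fun k : ℤ => a (k+1) * d k) := by
    apply Summable.of_norm
    apply hds.of_nonneg_of_le (fun k => norm_nonneg _)
    intro k
    rw [norm_mul]
    calc ‖a (k+1)‖ * ‖d k‖ ≤ 1 * ‖d k‖ := by
          apply mul_le_mul_of_nonneg_right _ (norm_nonneg _)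
          simpa [Real.norm_eq_abs] using hb (k+1)
      _ = d k := by rw [one_mul, Real.norm_eq_abs, abs_of_nonneg (hdnn k)]
  have hpt : ∀ k : ℤ, (a (k+1) - a k)^2 = a (k+1) * d k + a k * (a k - a (k+1)) := by
    intro k; simp only [hd]; ring
  have he_eq_g : ∑' k : ℤ, a (k+1) * d k = ∑' k : ℤ, a k * (a k - a (k+1)) := by
    have h1 : ∑' k : ℤ, a (-k+1) * d (-k) = ∑' k : ℤ, a (k+1) * d k :=
      (Equiv.neg ℤ).tsum_eq (fun k => a (k+1) * d k)
    rw [← h1]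
    apply tsum_congr
    intro k
    have e1 : a (-k+1) = - a k := by rw [← hodd k]; ring_nf
    have e2 : a (-k) = - a (k+1) := by
      have := hodd (k+1); rw [← this]; ring_nf
    simp only [hd, e1, e2]; ring
  rw [tsum_congr hpt, Summable.tsum_add hes hgs, he_eq_g]
  ring

section main
variable (α : ℝ)

noncomputable def cc (t : ℝ) : ℝ := Real.sqrt (α / (8 * t))

noncomputable def A (k : ℤ) (t : ℝ) : ℝ := erf ((2 * (k : ℝ) - 1) * cc α t)

lemma abs_erf_le_one (x : ℝ) : |erf x| ≤ 1 :=
  abs_le.2 ⟨neg_one_le_erf x, erf_le_one x⟩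

lemma cc_nonneg (t : ℝ) : 0 ≤ cc α t := Real.sqrt_nonneg _

lemma A_mono (t : ℝ) : Monotone (fun k => A α k t) := by
  intro k j hkj
  apply erf_mono
  apply mul_le_mul_of_nonneg_right _ (cc_nonneg α t)
  have : (k:ℝ) ≤ (j:ℝ) := by exact_mod_cast hkj
  linarith

lemma A_odd (t : ℝ) (k : ℤ) : A α (1 - k) t = - A α k t := by
  unfold A
  have : (2 * ((1 - k : ℤ) : ℝ) - 1) * cc α t = -((2 * (k:ℝ) - 1) * cc α t) := by
    push_cast; ring
  rw [this, erf_neg]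

lemma abs_A_le_one (t : ℝ) (k : ℤ) : |A α k t| ≤ 1 := abs_erf_le_one _

/-- the k-th summand of the RHS, as a function of t -/
noncomputable def G (k : ℤ) (t : ℝ) : ℝ := A α k t * (A α k t - A α (k + 1) t)

lemma G_eq (k : ℤ) (t : ℝ) : G α k t =
    erf ((2 * (k : ℝ) - 1) * Real.sqrt (α / (8 * t))) *
      (erf ((2 * (k : ℝ) - 1) * Real.sqrt (α / (8 * t)))
        - erf ((2 * (k : ℝ) + 1) * Real.sqrt (α / (8 * t)))) := by
  unfold G A cc
  have h : (2 * (((k+1):ℤ) : ℝ) - 1) = 2 * (k:ℝ) + 1 := by push_cast; ring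
  rw [h]

lemma abs_G_le (k : ℤ) (t : ℝ) : ‖G α k t‖ ≤ A α (k+1) t - A α k t := by
  have hd : 0 ≤ A α (k+1) t - A α k t := sub_nonneg.2 (A_mono α t (by omega))
  unfold G
  rw [Real.norm_eq_abs, abs_mul]
  have h1 : |A α k t - A α (k+1) t| = A α (k+1) t - A α k t := by
    rw [abs_sub_comm, abs_of_nonneg hd]
  rw [h1]
  calc |A α k t| * (A α (k+1) t - A α k t) ≤ 1 * (A α (k+1) t - A α k t) :=
        mul_le_mul_of_nonneg_right (abs_A_le_one α t k) hd
    _ = _ := one_mul _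

lemma sum_G_le (u : Finset ℤ) (t : ℝ) : ∑ k ∈ u, ‖G α k t‖ ≤ 2 := by
  calc ∑ k ∈ u, ‖G α k t‖ ≤ ∑ k ∈ u, (A α (k+1) t - A α k t) :=
        Finset.sum_le_sum (fun k _ => abs_G_le α k t)
    _ ≤ 2 := sum_diff_le _ (A_mono α t) (abs_A_le_one α t) u

lemma G_contOn (k : ℤ) : ContinuousOn (G α k) (Set.Ioc (0:ℝ) 1) := by
  have hc : ContinuousOn (cc α) (Set.Ioc (0:ℝ) 1) := by
    apply Real.continuous_sqrt.comp_continuousOn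
    apply ContinuousOn.div continuousOn_const (by fun_prop)
    intro t ht
    have : (0:ℝ) < t := ht.1
    positivity
  have hA : ∀ j : ℤ, ContinuousOn (fun t => A α j t) (Set.Ioc (0:ℝ) 1) := by
    intro j
    exact continuous_erf.comp_continuousOn ((continuousOn_const.mul hc))
  exact (hA k).mul ((hA k).sub (hA (k+1)))

lemma G_integrable (k : ℤ) : Integrable (G α k) (volume.restrict (Set.Ioc (0:ℝ) 1)) := by
  haveI : Fact (volume (Set.Ioc (0:ℝ) 1) < ⊤) := ⟨measure_Ioc_lt_top⟩
  apply Integrable.mono' (integrable_const (2:ℝ))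
    ((G_contOn α k).aestronglyMeasurable measurableSet_Ioc)
  filter_upwards with t
  have h1 := abs_G_le α k t
  have h2 := abs_A_le_one α t k
  have h3 := abs_A_le_one α t (k+1)
  rw [abs_le] at h2 h3
  rw [Real.norm_eq_abs] at *
  linarith [h1]

lemma summable_integral_norm_G :
    Summable (fun k : ℤ => ∫ t, ‖G α k t‖ ∂(volume.restrict (Set.Ioc (0:ℝ) 1))) := by
  haveI : Fact (volume (Set.Ioc (0:ℝ) 1) < ⊤) := ⟨measure_Ioc_lt_top⟩
  apply summable_of_sum_le (c := 2)
  · intro k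
    exact integral_nonneg (fun t => norm_nonneg _)
  · intro u
    rw [← integral_finset_sum u (fun k _ => (G_integrable α k).norm)]
    calc ∫ t, ∑ k ∈ u, ‖G α k t‖ ∂(volume.restrict (Set.Ioc (0:ℝ) 1))
        ≤ ∫ _t, (2:ℝ) ∂(volume.restrict (Set.Ioc (0:ℝ) 1)) := by
          apply integral_mono (integrable_finset_sum u (fun k _ => (G_integrable α k).norm))
            (integrable_const 2)
          intro t
          exact sum_G_le α u t
      _ = 2 := by
          rw [integral_const]
          simp [Real.volume_Ioc]

/-- pointwise identity on `(0,1]` -/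
lemma pointwise_id (hα : 0 < α) (t : ℝ) (ht : t ∈ Set.Ioc (0:ℝ) 1) :
    (α / (8 * Real.pi * t)) *
      ∑' k : ℤ, (∫ x in (2 * (k : ℝ) - 1)..(2 * (k : ℝ) + 1),
        Real.exp (-(α * x ^ 2) / (8 * t))) ^ 2
    = (1/2) * ∑' k : ℤ, G α k t := by
  have ht0 : 0 < t := ht.1
  set c := cc α t with hcdef
  have hc : 0 < c := Real.sqrt_pos.2 (by positivity)
  have hc2 : c ^ 2 = α / (8 * t) := Real.sq_sqrt (by positivity)
  have hinner : ∀ k : ℤ, (∫ x in (2 * (k : ℝ) - 1)..(2 * (k : ℝ) + 1),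
      Real.exp (-(α * x ^ 2) / (8 * t)))
      = Real.sqrt Real.pi / (2*c) * (A α (k+1) t - A α k t) := by
    intro k
    have hexp : ∀ x : ℝ, Real.exp (-(α * x ^ 2) / (8 * t)) = Real.exp (-(c*x)^2) := by
      intro x
      congr 1
      rw [mul_pow, hc2]
      field_simp
    rw [intervalIntegral.integral_congr (g := fun x => Real.exp (-(c*x)^2)) (fun x _ => hexp x),
      integral_exp_sq_erf c _ _ hc]
    have e1 : c * (2 * (k : ℝ) + 1) = (2 * ((k:ℤ)+1 : ℤ) - 1 : ℝ) * c := by push_cast; ring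
    have e2 : c * (2 * (k : ℝ) - 1) = (2 * (k:ℝ) - 1) * c := by ring
    rw [e1, e2]
    rfl
  have hsum : ∑' k : ℤ, (∫ x in (2 * (k : ℝ) - 1)..(2 * (k : ℝ) + 1),
      Real.exp (-(α * x ^ 2) / (8 * t))) ^ 2
      = (Real.sqrt Real.pi / (2*c))^2 * ∑' k : ℤ, (A α (k+1) t - A α k t) ^ 2 := by
    rw [← tsum_mul_left]
    apply tsum_congr
    intro k
    rw [hinner k, mul_pow]
  rw [hsum, key_identity (fun k => A α k t) (A_odd α t) (A_mono α t) (abs_A_le_one α t)]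
  have hπ : 0 < Real.pi := Real.pi_pos
  have hsq : Real.sqrt Real.pi ^ 2 = Real.pi := Real.sq_sqrt hπ.le
  have hG : ∑' k : ℤ, G α k t = ∑' k : ℤ, (fun k => A α k t) k * ((fun k => A α k t) k - (fun k => A α k t) (k+1)) := rfl
  rw [hG]
  have : (α / (8 * Real.pi * t)) * ((Real.sqrt Real.pi / (2*c))^2 *
      (2 * ∑' k : ℤ, (fun k => A α k t) k * ((fun k => A α k t) k - (fun k => A α k t) (k+1))))
      = ((α / (8 * Real.pi * t)) * (Real.sqrt Real.pi / (2*c))^2 * 2) *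
        ∑' k : ℤ, (fun k => A α k t) k * ((fun k => A α k t) k - (fun k => A α k t) (k+1)) := by ring
  rw [this]
  congr 1
  rw [div_pow, hsq, mul_pow, hc2]
  have h8t : (8:ℝ) * t ≠ 0 := by positivity
  field_simp

theorem sFun_alt_repr'' (hα : 0 < α) :
    sFun α = (1 / 2) * ∑' k : ℤ, ∫ t in (0:ℝ)..1,
      erf ((2 * (k : ℝ) - 1) * Real.sqrt (α / (8 * t))) *
        (erf ((2 * (k : ℝ) - 1) * Real.sqrt (α / (8 * t)))
          - erf ((2 * (k : ℝ) + 1) * Real.sqrt (α / (8 * t)))) := by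
  have hG : ∀ k : ℤ, (∫ t in (0:ℝ)..1,
      erf ((2 * (k : ℝ) - 1) * Real.sqrt (α / (8 * t))) *
        (erf ((2 * (k : ℝ) - 1) * Real.sqrt (α / (8 * t)))
          - erf ((2 * (k : ℝ) + 1) * Real.sqrt (α / (8 * t)))))
      = ∫ t in Set.Ioc (0:ℝ) 1, G α k t := by
    intro k
    rw [intervalIntegral.integral_of_le zero_le_one]
    exact setIntegral_congr_fun measurableSet_Ioc (fun t _ => (G_eq α k t).symm)
  have hswap : ∑' k : ℤ, ∫ t in Set.Ioc (0:ℝ) 1, G α k t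
      = ∫ t in Set.Ioc (0:ℝ) 1, ∑' k : ℤ, G α k t :=
    integral_tsum_of_summable_integral_norm (G_integrable α) (summable_integral_norm_G α)
  calc sFun α = ∫ t in Set.Ioc (0:ℝ) 1, (α / (8 * Real.pi * t)) *
        ∑' k : ℤ, (∫ x in (2 * (k : ℝ) - 1)..(2 * (k : ℝ) + 1),
          Real.exp (-(α * x ^ 2) / (8 * t))) ^ 2 := by
        unfold sFun; rw [intervalIntegral.integral_of_le zero_le_one]
    _ = ∫ t in Set.Ioc (0:ℝ) 1, (1/2) * ∑' k : ℤ, G α k t :=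
        setIntegral_congr_fun measurableSet_Ioc (fun t ht => pointwise_id α hα t ht)
    _ = (1/2) * ∫ t in Set.Ioc (0:ℝ) 1, ∑' k : ℤ, G α k t := integral_const_mul _ _
    _ = (1/2) * ∑' k : ℤ, ∫ t in Set.Ioc (0:ℝ) 1, G α k t := by rw [hswap]
    _ = _ := by
        congr 1
        exact (tsum_congr (fun k => hG k)).symm

end main

/-- Alternative representation of `s(α)` in terms of the error
function. -/
theorem sFun_alt_repr (α : ℝ) (hα : 0 < α) :
    sFun α = (1 / 2) * ∑' k : ℤ, ∫ t in (0:ℝ)..1,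
      erf ((2 * (k : ℝ) - 1) * Real.sqrt (α / (8 * t))) *
        (erf ((2 * (k : ℝ) - 1) * Real.sqrt (α / (8 * t)))
          - erf ((2 * (k : ℝ) + 1) * Real.sqrt (α / (8 * t)))) :=
  sFun_alt_repr'' α hα
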